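/- Put s(τ) = (Ξ − 2ξ)/(q(1 − τ)). For every τ in the open interval ((q−2)/(q−1), 1) such that s(τ) ≥ 2 (so that λ(s(τ)−2) is defined), one has Π(τ, λ(s(τ) − 2)) ≤ 10·2^(τ·ξ) + 101. -/

import Mathlib

open scoped Classical ENNReal
open Real Set Filter

/-- The quadratic function `Q(s) = q·s²`. -/
noncomputable def Qf (q : ℤ) (s : ℝ) : ℝ := (q : ℝ) * s ^ 2

/-- The half-open interval `I_s = [2^(Q(s)), 2^(Q(s)) + Q(s+1) − Q(s) + Ξ)`. -/
noncomputable def Iset (q Ξ : ℤ) (s : ℝ) : Set ℝ :=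
  Set.Ico ((2 : ℝ) ^ (Qf q s)) ((2 : ℝ) ^ (Qf q s) + Qf q (s + 1) - Qf q s + (Ξ : ℝ))

/-- The half-open interval `J_s = [2^(Q(s)) + Q(s+1) − Q(s) + Ξ, 2^(Q(s+1)))`. -/
noncomputable def Jset (q Ξ : ℤ) (s : ℝ) : Set ℝ :=
  Set.Ico ((2 : ℝ) ^ (Qf q s) + Qf q (s + 1) - Qf q s + (Ξ : ℝ)) ((2 : ℝ) ^ (Qf q (s + 1)))

/-- The sequence `(x_j)` in `{0,1}`: `x_j = 0` iff `j + 1 ∈ I_s` for some integer `s ≥ 0`. -/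
noncomputable def xseq (q Ξ : ℤ) (j : ℕ) : ℕ :=
  if ∃ s : ℕ, ((j : ℝ) + 1) ∈ Iset q Ξ (s : ℝ) then 0 else 1

/-- `N(k) = #{ j ∈ {0,…,k−1} : x_j = 0 }`, with `N(0) = 0`. -/
noncomputable def Nf (q Ξ : ℤ) (k : ℕ) : ℕ :=
  ((Finset.range k).filter (fun j => xseq q Ξ j = 0)).card

/-- `B(0) = 0`, `B(1) = 1`, and for `k ≥ 2`,
`B(k) = 1 + #{ j ∈ {0,…,k−2} : x_j ≠ x_{j+1} }`. -/
noncomputable def Bf (q Ξ : ℤ) (k : ℕ) : ℕ :=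
  if k = 0 then 0
  else 1 + ((Finset.range (k - 1)).filter (fun j => xseq q Ξ j ≠ xseq q Ξ (j + 1))).card

/-- The length `|J_s| = 2^(Q(s+1)) − 2^(Q(s)) − (Q(s+1) − Q(s) + Ξ)` of `J_s`. -/
noncomputable def Jlen (q Ξ : ℤ) (s : ℝ) : ℝ :=
  (2 : ℝ) ^ (Qf q (s + 1)) - (2 : ℝ) ^ (Qf q s) - (Qf q (s + 1) - Qf q s + (Ξ : ℝ))

/-- `λ(s) = 1/|J_s|`. -/
noncomputable def lamf (q Ξ : ℤ) (s : ℝ) : ℝ := 1 / Jlen q Ξ s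

/-- The two-variable series `Π(τ,λ) = Σ_{k≥0} 2^(−λk − τ·N(k) + τ·ξ·B(k))`, a sum in `[0,∞]`. -/
noncomputable def Pi2 (q Ξ : ℤ) (ξ τ lam : ℝ) : ℝ≥0∞ :=
  ∑' k : ℕ, ENNReal.ofReal
    ((2 : ℝ) ^ (-lam * (k : ℝ) - τ * (Nf q Ξ k : ℝ) + τ * ξ * (Bf q Ξ k : ℝ)))



/-- block start positions -/
def Af (q : ℤ) (s : ℕ) : ℕ := 2 ^ (q.toNat * s ^ 2)

/-- zero-block lengths, as integers -/
def Lz (q Ξ : ℤ) (s : ℕ) : ℤ := q * (2 * (s : ℤ) + 1) + Ξ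

section basic
variable {q Ξ : ℤ} (hq : 3 ≤ q) (hqΞ : 1 ≤ q + Ξ)

lemma qtoNat (hq : 3 ≤ q) : ((q.toNat : ℤ)) = q := Int.toNat_of_nonneg (by omega)

lemma Af_one_le (q : ℤ) (s : ℕ) : 1 ≤ Af q s := Nat.one_le_two_pow

lemma Af_cast (hq : 3 ≤ q) (s : ℕ) : ((Af q s : ℕ) : ℝ) = (2 : ℝ) ^ (Qf q (s : ℝ)) := by
  have h : Qf q (s : ℝ) = ((q.toNat * s ^ 2 : ℕ) : ℝ) := by
    have hc : ((q.toNat : ℕ) : ℝ) = (q : ℝ) := by exact_mod_cast qtoNat hq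
    rw [Qf]; push_cast [hc]; ring
  rw [h, Real.rpow_natCast, Af]; push_cast; ring

lemma Lz_pos (hq : 3 ≤ q) (hqΞ : 1 ≤ q + Ξ) (s : ℕ) : 1 ≤ Lz q Ξ s := by
  have : (0:ℤ) ≤ 2 * q * s := by positivity
  simp only [Lz]; nlinarith

lemma Qf_diff (q : ℤ) (s : ℝ) : Qf q (s + 1) - Qf q s = q * (2 * s + 1) := by
  simp only [Qf]; ring

/-- integer form of the hypothesis `q+1+Ξ ≤ 2^(q-1)` -/
lemma hpow_int (hq : 3 ≤ q)
    (hpow : (q : ℝ) + 1 + (Ξ : ℝ) ≤ (2 : ℝ) ^ ((q : ℝ) - 1)) :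
    q + 1 + Ξ ≤ 2 ^ (q.toNat - 1) := by
  have h : ((q:ℝ) - 1) = ((q.toNat - 1 : ℕ) : ℝ) := by
    have : (3:ℕ) ≤ q.toNat := by omega
    have hc : ((q.toNat : ℕ) : ℝ) = (q : ℝ) := by exact_mod_cast qtoNat hq
    push_cast [Nat.cast_sub (by omega : 1 ≤ q.toNat), hc]; ring
  rw [h, Real.rpow_natCast] at hpow
  exact_mod_cast hpow

/-- key gap estimate: `A s + L s + 1 ≤ A (s+1)` -/
lemma gap (hq : 3 ≤ q) (hqΞ : 1 ≤ q + Ξ) (hpw : q + 1 + Ξ ≤ 2 ^ (q.toNat - 1)) (s : ℕ) :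
    (Af q s : ℤ) + Lz q Ξ s + 1 ≤ (Af q (s + 1) : ℤ) := by
  set n := q.toNat with hn
  have hq3 : (3:ℕ) ≤ n := by omega
  have hA1 : (1:ℤ) ≤ (Af q s : ℤ) := by exact_mod_cast Af_one_le q s
  have hsplit : Af q (s+1) = Af q s * 2 ^ (n * (2 * s + 1)) := by
    rw [Af, Af, ← pow_add]; congr 1; ring
  have h2n : (2:ℤ) ^ n = 2 * 2 ^ (n - 1) := by
    rw [← pow_succ']; congr 1; omega
  have hpw2 : (2:ℤ) * (q + 1 + Ξ) ≤ 2 ^ n := by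
    have : (q + 1 + Ξ : ℤ) ≤ 2 ^ (n - 1) := by exact_mod_cast hpw
    omega
  have hs2 : (2 * n * s : ℤ) + 1 ≤ 2 ^ (2 * n * s) := by
    have := @Nat.lt_two_pow_self (2 * n * s); exact_mod_cast this
  have hX : (2:ℤ) ^ (n * (2 * s + 1)) = 2 ^ n * 2 ^ (2 * n * s) := by
    rw [← pow_add]; congr 1; ring
  have hq' : ((n:ℤ)) = q := qtoNat hq
  have hprod : (2:ℤ) * (q + 1 + Ξ) * (2 * q * s + 1) ≤ 2 ^ n * 2 ^ (2 * n * s) := by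
    have h1 : (0:ℤ) ≤ 2 * (q+1+Ξ) := by omega
    have h2 : (0:ℤ) ≤ 2 * q * s + 1 := by positivity
    calc (2:ℤ) * (q + 1 + Ξ) * (2 * q * s + 1)
        ≤ 2 ^ n * (2 * q * s + 1) := mul_le_mul_of_nonneg_right hpw2 h2
      _ ≤ 2 ^ n * 2 ^ (2 * n * s) := by
          apply mul_le_mul_of_nonneg_left _ (by positivity)
          rw [← hq'] at *; push_cast at hs2 ⊢; linarith
  have hXge : (Lz q Ξ s) + 2 ≤ (2:ℤ) ^ (n * (2 * s + 1)) := by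
    rw [hX]
    have hqs : (0:ℤ) ≤ q * s := by positivity
    simp only [Lz]; nlinarith
  have : (Af q s : ℤ) * 2 ^ (n * (2 * s + 1)) ≥ Af q s + (2 ^ (n * (2*s+1)) - 1) := by
    have hX1 : (1:ℤ) ≤ 2 ^ (n * (2*s+1)) := one_le_pow₀ (by norm_num)
    nlinarith
  rw [hsplit]; push_cast
  have hLz := Lz_pos hq hqΞ s
  nlinarith

end basic
section xchar
variable {q Ξ : ℤ}

/-- bundled structural hypotheses -/
structure Hyp (q Ξ : ℤ) : Prop where
  hq : 3 ≤ q
  hqΞ : 1 ≤ q + Ξ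
  hpw : q + 1 + Ξ ≤ 2 ^ (q.toNat - 1)

lemma Hyp.gap' (h : Hyp q Ξ) (s : ℕ) :
    (Af q s : ℤ) + Lz q Ξ s + 1 ≤ (Af q (s + 1) : ℤ) := gap h.hq h.hqΞ h.hpw s

lemma Af_mono (h : Hyp q Ξ) : StrictMono (Af q) := by
  apply strictMono_nat_of_lt_succ
  intro s
  have := h.gap' s
  have := Lz_pos h.hq h.hqΞ s
  omega

lemma M_mono (h : Hyp q Ξ) {s t : ℕ} (hst : s ≤ t) :
    (Af q s : ℤ) + Lz q Ξ s ≤ (Af q t : ℤ) + Lz q Ξ t := by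
  induction t with
  | zero => simp_all
  | succ t ih =>
    rcases Nat.lt_or_ge s (t+1) with h1 | h2
    · have h3 := ih (by omega)
      have h4 := h.gap' t
      have h5 := Lz_pos h.hq h.hqΞ (t+1)
      omega
    · have : s = t+1 := by omega
      subst this; rfl

lemma xseq_zero_iff (h : Hyp q Ξ) (j : ℕ) :
    xseq q Ξ j = 0 ↔ ∃ s : ℕ, Af q s ≤ j + 1 ∧ ((j : ℤ) + 1 < (Af q s : ℤ) + Lz q Ξ s) := by
  have key : (∃ s : ℕ, ((j : ℝ) + 1) ∈ Iset q Ξ (s : ℝ)) ↔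
      (∃ s : ℕ, Af q s ≤ j + 1 ∧ ((j : ℤ) + 1 < (Af q s : ℤ) + Lz q Ξ s)) := by
    apply exists_congr; intro s
    rw [Iset, Set.mem_Ico, ← Af_cast h.hq]
    constructor
    · rintro ⟨h1, h2⟩
      constructor
      · exact_mod_cast h1
      · have h3 : ((j:ℝ) + 1) < (Af q s : ℝ) + (Qf q ((s:ℝ) + 1) - Qf q (s:ℝ) + (Ξ:ℝ)) := by
          linarith
        rw [Qf_diff] at h3
        have : ((j:ℝ) + 1) < ((Af q s : ℤ) + Lz q Ξ s : ℤ) := by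
          simp only [Lz]; push_cast at h3 ⊢; linarith
        exact_mod_cast this
    · rintro ⟨h1, h2⟩
      constructor
      · exact_mod_cast h1
      · have h3 : ((j:ℝ) + 1) < ((Af q s : ℤ) + Lz q Ξ s : ℤ) := by exact_mod_cast h2
        have h4 := Qf_diff q (s:ℝ)
        simp only [Lz] at h3; push_cast at h3 ⊢; linarith
  rw [xseq]
  split_ifs with hc
  · simp only [eq_self_iff_true, true_iff]; exact key.mp hc
  · constructor
    · intro h1; simp at h1
    · intro h1; exact absurd (key.mpr h1) hc

lemma xseq_zero_of (h : Hyp q Ξ) {s j : ℕ} (h1 : Af q s ≤ j + 1)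
    (h2 : (j : ℤ) + 1 < (Af q s : ℤ) + Lz q Ξ s) : xseq q Ξ j = 0 :=
  (xseq_zero_iff h j).mpr ⟨s, h1, h2⟩

lemma xseq_one_of (h : Hyp q Ξ) {s j : ℕ} (h1 : (Af q s : ℤ) + Lz q Ξ s ≤ (j:ℤ) + 1)
    (h2 : j + 1 < Af q (s + 1)) : xseq q Ξ j = 1 := by
  have hx : ¬ (xseq q Ξ j = 0) := by
    rw [xseq_zero_iff h j]
    rintro ⟨t, ht1, ht2⟩
    rcases Nat.lt_or_ge t (s+1) with hts | hts
    · have := M_mono h (by omega : t ≤ s)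
      omega
    · have := (Af_mono h).le_iff_le.mpr hts
      omega
  rw [xseq] at hx ⊢
  split_ifs at hx ⊢ with hc
  · omega
  · rfl

end xchar

def Lf (q Ξ : ℤ) (s : ℕ) : ℕ := (Lz q Ξ s).toNat

def Cz (q Ξ : ℤ) (s : ℕ) : ℤ := q * (s : ℤ) ^ 2 + Ξ * (s : ℤ)

section NB
variable {q Ξ : ℤ}

lemma Lf_cast (h : Hyp q Ξ) (s : ℕ) : ((Lf q Ξ s : ℕ) : ℤ) = Lz q Ξ s :=
  Int.toNat_of_nonneg (by have := Lz_pos h.hq h.hqΞ s; omega)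

lemma Lf_pos (h : Hyp q Ξ) (s : ℕ) : 1 ≤ Lf q Ξ s := by
  have h1 := Lz_pos h.hq h.hqΞ s; have h2 := Lf_cast h s; omega

lemma Cz_succ (s : ℕ) : Cz q Ξ (s + 1) = Cz q Ξ s + Lz q Ξ s := by
  simp only [Cz, Lz]; push_cast; ring

lemma gapN (h : Hyp q Ξ) (s : ℕ) : Af q s + Lf q Ξ s + 1 ≤ Af q (s + 1) := by
  have h1 := h.gap' s; have h2 := Lf_cast h s; omega

lemma Af_ge_two (hq : 3 ≤ q) {s : ℕ} (hs : 1 ≤ s) : 2 ≤ Af q s := by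
  have h1 : 1 ≤ q.toNat * s ^ 2 := by
    have : 1 ≤ s ^ 2 := Nat.one_le_pow _ _ hs
    have : 3 ≤ q.toNat := by omega
    nlinarith
  calc 2 = 2 ^ 1 := rfl
    _ ≤ 2 ^ (q.toNat * s ^ 2) := Nat.pow_le_pow_right (by norm_num) h1
    _ = Af q s := rfl

lemma Nf_succ (k : ℕ) : Nf q Ξ (k + 1) = Nf q Ξ k + if xseq q Ξ k = 0 then 1 else 0 := by
  simp only [Nf, Finset.range_add_one, Finset.filter_insert]
  split_ifs with hx
  · rw [Finset.card_insert_of_notMem (by simp)]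
  · rw [Nat.add_zero]

lemma Bf_zero : Bf q Ξ 0 = 0 := by simp [Bf]

lemma Bf_one : Bf q Ξ 1 = 1 := by simp [Bf]

lemma Nf_zero : Nf q Ξ 0 = 0 := by simp [Nf]

lemma Bf_succ_succ (k : ℕ) :
    Bf q Ξ (k + 2) = Bf q Ξ (k + 1) + if xseq q Ξ k = xseq q Ξ (k + 1) then 0 else 1 := by
  simp only [Bf, Nat.succ_ne_zero, if_false, Nat.add_sub_cancel]
  have e1 : k + 2 - 1 = k + 1 := rfl
  rw [e1, Finset.range_add_one, Finset.filter_insert]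
  by_cases hx : xseq q Ξ k = xseq q Ξ (k + 1)
  · rw [if_neg (not_not_intro hx), if_pos hx]
    omega
  · rw [if_pos hx, if_neg hx, Finset.card_insert_of_notMem (by simp)]
    omega

lemma In0 (h : Hyp q Ξ) (s : ℕ)
    (baseN : (Nf q Ξ (Af q s - 1) : ℤ) = Cz q Ξ s) (baseB : Bf q Ξ (Af q s - 1) = 2 * s) :
    ∀ i, i ≤ Lf q Ξ s →
      (Nf q Ξ (Af q s - 1 + i) : ℤ) = Cz q Ξ s + i ∧
      Bf q Ξ (Af q s - 1 + i) = if i = 0 then 2 * s else 2 * s + 1 := by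
  intro i
  induction i with
  | zero => intro _; simpa using ⟨baseN, baseB⟩
  | succ i ih =>
    intro hi
    have hA1 := Af_one_le q s
    have hLf := Lf_cast h s
    obtain ⟨hN, hB⟩ := ih (by omega)
    have hk1 : Af q s - 1 + i + 1 = Af q s + i := by omega
    set k := Af q s - 1 + i with hkdef
    have hkz : (k : ℤ) + 1 = (Af q s : ℤ) + i := by
      have : ((k + 1 : ℕ) : ℤ) = ((Af q s + i : ℕ) : ℤ) := by rw [hk1]
      push_cast at this; omega
    have hxk : xseq q Ξ k = 0 := by
      apply xseq_zero_of h (s := s) (by omega)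
      have : (i : ℤ) < Lz q Ξ s := by omega
      omega
    have hN' : (Nf q Ξ (k + 1) : ℤ) = Cz q Ξ s + (i + 1) := by
      rw [Nf_succ, if_pos hxk]; push_cast; omega
    refine ⟨by exact_mod_cast hN', ?_⟩
    rw [if_neg (Nat.succ_ne_zero i)]
    show Bf q Ξ (k + 1) = 2 * s + 1
    have hkEq : k = Af q s - 1 + i := hkdef
    rcases Nat.eq_zero_or_pos k with hk0 | hkpos
    · have hAf1 : Af q s = 1 := by omega
      have hs0 : s = 0 := by
        by_contra hs
        have := Af_ge_two h.hq (s := s) (by omega)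
        omega
      rw [hk0, Bf_one, hs0]
    · obtain ⟨m, hm⟩ : ∃ m, k = m + 1 := ⟨k - 1, by omega⟩
      have hxk' : xseq q Ξ (m + 1) = 0 := hm ▸ hxk
      have hmz : (m : ℤ) + 1 = (k : ℤ) := by omega
      have hkk : Bf q Ξ (k + 1) = Bf q Ξ k + if xseq q Ξ m = xseq q Ξ (m + 1) then 0 else 1 := by
        rw [hm]; exact Bf_succ_succ m
      rw [hkk]
      rcases Nat.eq_zero_or_pos i with hi0 | hipos
      · have hs1 : 1 ≤ s := by
          by_contra hs
          have hs0 : s = 0 := by omega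
          have hA0 : Af q 0 = 1 := by norm_num [Af]
          rw [hs0] at hkEq
          omega
        obtain ⟨t, ht⟩ : ∃ t, s = t + 1 := ⟨s - 1, by omega⟩
        have hg := h.gap' t
        have hAfs : (Af q t : ℤ) + Lz q Ξ t + 1 ≤ (Af q s : ℤ) := by rw [ht]; exact hg
        have hxm : xseq q Ξ m = 1 := by
          apply xseq_one_of h (s := t)
          · omega
          · have hlt : m + 1 < Af q s := by omega
            rw [ht] at hlt; exact hlt
        rw [hB, if_pos hi0, if_neg (by rw [hxm, hxk']; exact one_ne_zero)]
      · have hxm : xseq q Ξ m = 0 :=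
          xseq_zero_of h (s := s) (by omega) (by omega)
        rw [hB, if_neg (by omega), if_pos (by rw [hxm, hxk'])]
  end NB

section NB2
variable {q Ξ : ℤ}

lemma In1 (h : Hyp q Ξ) (s : ℕ)
    (baseN : (Nf q Ξ (Af q s + Lf q Ξ s - 1) : ℤ) = Cz q Ξ (s + 1))
    (baseB : Bf q Ξ (Af q s + Lf q Ξ s - 1) = 2 * s + 1) :
    ∀ m, Af q s + Lf q Ξ s - 1 + m ≤ Af q (s + 1) - 1 →
      (Nf q Ξ (Af q s + Lf q Ξ s - 1 + m) : ℤ) = Cz q Ξ (s + 1) ∧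
      Bf q Ξ (Af q s + Lf q Ξ s - 1 + m) = if m = 0 then 2 * s + 1 else 2 * s + 2 := by
  have hA1 := Af_one_le q s
  have hL1 := Lf_pos h s
  have hLf := Lf_cast h s
  have hgap := gapN h s
  set k0 := Af q s + Lf q Ξ s - 1 with hk0def
  intro m
  induction m with
  | zero => intro _; simpa using ⟨baseN, baseB⟩
  | succ m ih =>
    intro hm
    obtain ⟨hN, hB⟩ := ih (by omega)
    set k := k0 + m with hkdef
    have hxk : xseq q Ξ k = 1 := by
      apply xseq_one_of h (s := s)
      · omega
      · omega
    have hN' : (Nf q Ξ (k + 1) : ℤ) = Cz q Ξ (s + 1) := by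
      rw [Nf_succ, if_neg (by omega)]; push_cast; omega
    refine ⟨hN', ?_⟩
    rw [if_neg (Nat.succ_ne_zero m)]
    show Bf q Ξ (k + 1) = 2 * s + 2
    have hkpos : 1 ≤ k := by omega
    obtain ⟨p, hp⟩ : ∃ p, k = p + 1 := ⟨k - 1, by omega⟩
    have hxk' : xseq q Ξ (p + 1) = 1 := hp ▸ hxk
    have hkk : Bf q Ξ (k + 1) = Bf q Ξ k + if xseq q Ξ p = xseq q Ξ (p + 1) then 0 else 1 := by
      rw [hp]; exact Bf_succ_succ p
    rw [hkk]
    rcases Nat.eq_zero_or_pos m with hm0 | hmpos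
    · -- p + 1 = k0 : last symbol of the zero block
      have hxp : xseq q Ξ p = 0 := by
        apply xseq_zero_of h (s := s)
        · omega
        · omega
      rw [hB, if_pos hm0, if_neg (by rw [hxp, hxk']; omega)]
    · have hxp : xseq q Ξ p = 1 := by
        apply xseq_one_of h (s := s)
        · omega
        · omega
      rw [hB, if_neg (by omega), if_pos (by rw [hxp, hxk'])]

lemma ZB (h : Hyp q Ξ) :
    ∀ s, (Nf q Ξ (Af q s - 1) : ℤ) = Cz q Ξ s ∧ Bf q Ξ (Af q s - 1) = 2 * s := by
  intro s
  induction s with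
  | zero =>
    have : Af q 0 = 1 := by norm_num [Af]
    rw [this]
    simp [Nf_zero, Bf_zero, Cz]
  | succ s ih =>
    obtain ⟨ihN, ihB⟩ := ih
    have hA1 := Af_one_le q s
    have hL1 := Lf_pos h s
    have hLf := Lf_cast h s
    have hgap := gapN h s
    have hend := In0 h s ihN ihB (Lf q Ξ s) le_rfl
    have hendN : (Nf q Ξ (Af q s + Lf q Ξ s - 1) : ℤ) = Cz q Ξ (s + 1) := by
      have e : Af q s - 1 + Lf q Ξ s = Af q s + Lf q Ξ s - 1 := by omega
      rw [← e, hend.1, Cz_succ]; omega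
    have hendB : Bf q Ξ (Af q s + Lf q Ξ s - 1) = 2 * s + 1 := by
      have e : Af q s - 1 + Lf q Ξ s = Af q s + Lf q Ξ s - 1 := by omega
      rw [← e, hend.2, if_neg (by omega)]
    have hfin := In1 h s hendN hendB (Af q (s + 1) - 1 - (Af q s + Lf q Ξ s - 1))
      (by omega)
    have e2 : Af q s + Lf q Ξ s - 1 + (Af q (s + 1) - 1 - (Af q s + Lf q Ξ s - 1))
        = Af q (s + 1) - 1 := by omega
    rw [e2] at hfin
    refine ⟨hfin.1, ?_⟩
    rw [hfin.2, if_neg (by omega)]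
    omega

lemma exists_block (h : Hyp q Ξ) {k : ℕ} (hk : 1 ≤ k) :
    ∃ s, Af q s ≤ k ∧ k < Af q (s + 1) := by
  have hub : ∃ n, k < Af q n := by
    refine ⟨k, ?_⟩
    calc k < 2 ^ k := Nat.lt_two_pow_self
      _ ≤ Af q k := Nat.pow_le_pow_right (by norm_num) (by
          have h3 : 3 ≤ q.toNat := by have := h.hq; omega
          nlinarith [Nat.le_self_pow (show 2 ≠ 0 by norm_num) k])
  classical
  let n0 := Nat.find hub
  have hn0 : k < Af q n0 := Nat.find_spec hub
  have hn0pos : 1 ≤ n0 := by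
    rcases Nat.eq_zero_or_pos n0 with h0 | h1
    · exfalso
      have : Af q 0 = 1 := by norm_num [Af]
      rw [h0, this] at hn0; omega
    · exact h1
  refine ⟨n0 - 1, ?_, ?_⟩
  · have := Nat.find_min hub (show n0 - 1 < n0 by omega)
    omega
  · have e : n0 - 1 + 1 = n0 := by omega
    rw [e]; exact hn0

/-- Master lemma: exact values of N and B for every k ≥ 1. -/
lemma VAL (h : Hyp q Ξ) {k : ℕ} (hk : 1 ≤ k) :
    ∃ s : ℕ,
      (Af q s ≤ k ∧ (k : ℤ) < (Af q s : ℤ) + Lz q Ξ s ∧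
        (Nf q Ξ k : ℤ) = Cz q Ξ s + ((k : ℤ) - Af q s + 1) ∧ Bf q Ξ k = 2 * s + 1) ∨
      ((Af q s : ℤ) + Lz q Ξ s ≤ (k : ℤ) ∧ k < Af q (s + 1) ∧
        (Nf q Ξ k : ℤ) = Cz q Ξ (s + 1) ∧ Bf q Ξ k = 2 * s + 2) := by
  obtain ⟨s, hs1, hs2⟩ := exists_block h hk
  have hA1 := Af_one_le q s
  have hL1 := Lf_pos h s
  have hLf := Lf_cast h s
  have hgap := gapN h s
  obtain ⟨bN, bB⟩ := ZB h s
  refine ⟨s, ?_⟩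
  rcases lt_or_ge (k : ℤ) ((Af q s : ℤ) + Lz q Ξ s) with hlt | hge
  · left
    have hi : k - (Af q s - 1) ≤ Lf q Ξ s := by omega
    have := In0 h s bN bB (k - (Af q s - 1)) hi
    have e : Af q s - 1 + (k - (Af q s - 1)) = k := by omega
    rw [e] at this
    refine ⟨hs1, hlt, ?_, ?_⟩
    · rw [this.1]; push_cast; omega
    · rw [this.2, if_neg (by omega)]
  · right
    have hendN : (Nf q Ξ (Af q s + Lf q Ξ s - 1) : ℤ) = Cz q Ξ (s + 1) := by
      have hend := In0 h s bN bB (Lf q Ξ s) le_rfl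
      have e : Af q s - 1 + Lf q Ξ s = Af q s + Lf q Ξ s - 1 := by omega
      rw [← e, hend.1, Cz_succ]; omega
    have hendB : Bf q Ξ (Af q s + Lf q Ξ s - 1) = 2 * s + 1 := by
      have hend := In0 h s bN bB (Lf q Ξ s) le_rfl
      have e : Af q s - 1 + Lf q Ξ s = Af q s + Lf q Ξ s - 1 := by omega
      rw [← e, hend.2, if_neg (by omega)]
    have hm := In1 h s hendN hendB (k - (Af q s + Lf q Ξ s - 1)) (by omega)
    have e2 : Af q s + Lf q Ξ s - 1 + (k - (Af q s + Lf q Ξ s - 1)) = k := by omega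
    rw [e2] at hm
    refine ⟨hge, hs2, hm.1, ?_⟩
    rw [hm.2, if_neg (by omega)]

end NB2

section Analytic

lemma geom_sum_le {a b : ℝ} (ha : 0 ≤ a) (hab : a ≤ b) (hb : b < 1) :
    ∑' n : ℕ, (ENNReal.ofReal a) ^ n ≤ ENNReal.ofReal (1 - b)⁻¹ := by
  rw [ENNReal.tsum_geometric]
  have h1 : (1 : ℝ≥0∞) - ENNReal.ofReal a = ENNReal.ofReal (1 - a) := by
    rw [ENNReal.ofReal_sub _ ha, ENNReal.ofReal_one]
  rw [h1, ← ENNReal.ofReal_inv_of_pos (by linarith)]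
  apply ENNReal.ofReal_le_ofReal
  apply inv_anti₀ (by linarith)
  linarith

lemma rpow_half : (2:ℝ) ^ (-(1/2) : ℝ) ≤ 3/4 := by
  have h1 : (4/3 : ℝ) ≤ (2:ℝ) ^ ((1/2 : ℝ)) := by
    have h2 : ((4/3:ℝ)) ^ (2:ℕ) ≤ ((2:ℝ) ^ ((1/2:ℝ))) ^ (2:ℕ) := by
      rw [← Real.rpow_natCast ((2:ℝ) ^ ((1/2:ℝ))) 2, ← Real.rpow_mul (by norm_num)]
      norm_num
    exact le_of_pow_le_pow_left₀ (by norm_num) (by positivity) h2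
  have := inv_anti₀ (by norm_num : (0:ℝ) < 4/3) h1
  rw [Real.rpow_neg (by norm_num)]
  calc ((2:ℝ) ^ ((1/2:ℝ)))⁻¹ ≤ (4/3 : ℝ)⁻¹ := this
    _ ≤ 3/4 := by norm_num

lemma rpow_quarter : (2:ℝ) ^ (-(1/4) : ℝ) ≤ 6/7 := by
  have h1 : (7/6 : ℝ) ≤ (2:ℝ) ^ ((1/4 : ℝ)) := by
    have h2 : ((7/6:ℝ)) ^ (4:ℕ) ≤ ((2:ℝ) ^ ((1/4:ℝ))) ^ (4:ℕ) := by
      rw [← Real.rpow_natCast ((2:ℝ) ^ ((1/4:ℝ))) 4, ← Real.rpow_mul (by norm_num)]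
      norm_num
    exact le_of_pow_le_pow_left₀ (by norm_num) (by positivity) h2
  have := inv_anti₀ (by norm_num : (0:ℝ) < 7/6) h1
  rw [Real.rpow_neg (by norm_num)]
  calc ((2:ℝ) ^ ((1/4:ℝ)))⁻¹ ≤ (7/6 : ℝ)⁻¹ := this
    _ ≤ 6/7 := by norm_num

lemma rpow_threehalf : (2:ℝ) ^ (-(3/2) : ℝ) ≤ 1/2 := by
  have h1 : (2 : ℝ) ≤ (2:ℝ) ^ ((3/2 : ℝ)) := by
    calc (2:ℝ) = (2:ℝ) ^ ((1:ℝ)) := by rw [Real.rpow_one]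
      _ ≤ (2:ℝ) ^ ((3/2:ℝ)) := by
          apply Real.rpow_le_rpow_left_iff (by norm_num : (1:ℝ) < 2) |>.mpr
          norm_num
  have := inv_anti₀ (by norm_num : (0:ℝ) < 2) h1
  rw [Real.rpow_neg (by norm_num)]
  calc ((2:ℝ) ^ ((3/2:ℝ)))⁻¹ ≤ (2 : ℝ)⁻¹ := this
    _ ≤ 1/2 := by norm_num

lemma rpow_three : (2:ℝ) ^ (-(3:ℝ)) ≤ 1/2 := by
  have h1 : (2 : ℝ) ≤ (2:ℝ) ^ ((3 : ℝ)) := by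
    calc (2:ℝ) = (2:ℝ) ^ ((1:ℝ)) := by rw [Real.rpow_one]
      _ ≤ (2:ℝ) ^ ((3:ℝ)) := by
          apply Real.rpow_le_rpow_left_iff (by norm_num : (1:ℝ) < 2) |>.mpr
          norm_num
  have := inv_anti₀ (by norm_num : (0:ℝ) < 2) h1
  rw [Real.rpow_neg (by norm_num)]
  calc ((2:ℝ) ^ ((3:ℝ)))⁻¹ ≤ (2 : ℝ)⁻¹ := this
    _ ≤ 1/2 := by norm_num

lemma one_sub_rpow_inv {lam : ℝ} (h : 0 < lam) :
    (1 - (2:ℝ) ^ (-lam))⁻¹ ≤ 1 + 2 / lam := by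
  have hlog : Real.log 2 ≥ 1/2 := by
    have := Real.log_two_gt_d9; linarith
  have hy : 1 + lam / 2 ≤ (2:ℝ) ^ lam := by
    rw [Real.rpow_def_of_pos (by norm_num)]
    have h2 := Real.add_one_le_exp (Real.log 2 * lam)
    nlinarith
  have hylt : (1:ℝ) < (2:ℝ) ^ lam := by nlinarith
  have hneg : (2:ℝ) ^ (-lam) = ((2:ℝ) ^ lam)⁻¹ := Real.rpow_neg (by norm_num) lam
  set y := (2:ℝ) ^ lam with hydef
  have hy0 : 0 < y := by linarith
  have h1 : 1 - y⁻¹ = (y - 1)/y := by field_simp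
  rw [hneg, h1, inv_div]
  have h3 : 1 + 2/lam = (lam + 2)/lam := by field_simp
  rw [h3, div_le_div_iff₀ (by linarith) h]
  nlinarith

lemma e1_bound {qr c σ τ u : ℝ} (hq : 3 ≤ qr) (hc1 : 1 ≤ c) (hc2 : c ≤ 2)
    (hτ : 1/2 ≤ τ) (hτ1 : τ < 1) (hσ : 2 ≤ σ) (hrel : c = qr * σ * (1 - τ))
    (hu1 : 1 ≤ u) (hu2 : u ≤ σ - 1) :
    qr*u^2 - τ*(qr*u^2 + c*u) ≤ -(u/4) ∨
    qr*u^2 - τ*(qr*u^2 + c*u) ≤ -((σ-1-u)/4) := by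
  subst hrel
  set c := qr * σ * (1 - τ) with hc
  have hq0 : 0 < qr := by linarith
  have hσ0 : 0 < σ := by linarith
  have hqσ : 0 < qr * σ := mul_pos hq0 hσ0
  have key : qr * σ * (qr*u^2 - τ*(qr*u^2 + c*u)) = c * u * (qr*u - qr*σ + c) := by
    rw [hc]; ring
  have hfneg : qr*u - qr*σ + c ≤ -(qr*(σ - 1 - u)) - 1 := by nlinarith
  have hfneg2 : qr*u - qr*σ + c ≤ 0 := by nlinarith
  have step1 : c * u * (qr*u - qr*σ + c) ≤ u * (qr*u - qr*σ + c) := by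
    nlinarith [mul_nonneg (mul_nonneg (by linarith : (0:ℝ) ≤ c - 1) (by linarith : (0:ℝ) ≤ u))
      (by linarith : (0:ℝ) ≤ -(qr*u - qr*σ + c))]
  have step2 : u * (qr*u - qr*σ + c) ≤ u * (-(qr*(σ - 1 - u)) - 1) := by nlinarith
  rcases le_or_gt (2*u) (σ-1) with hcase | hcase
  · left
    have h4 : qr * σ * (qr*u^2 - τ*(qr*u^2 + c*u)) ≤ qr * σ * (-(u/4)) := by
      have hr : qr * σ * (-(u/4)) = -(qr*σ*(u/4)) := by ring
      rw [hr]
      have h1 : u * (-(qr*(σ - 1 - u)) - 1) ≤ -(qr*σ*(u/4)) := by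
        nlinarith [mul_nonneg (by positivity : (0:ℝ) ≤ qr*u)
          (by linarith : (0:ℝ) ≤ (σ-1-u) - σ/4)]
      linarith
    exact le_of_mul_le_mul_left h4 hqσ
  · right
    have h4 : qr * σ * (qr*u^2 - τ*(qr*u^2 + c*u)) ≤ qr * σ * (-((σ-1-u)/4)) := by
      have hr : qr * σ * (-((σ-1-u)/4)) = -(qr*σ*((σ-1-u)/4)) := by ring
      rw [hr]
      have hd0 : 0 ≤ σ - 1 - u := by linarith
      have h1 : u * (-(qr*(σ - 1 - u)) - 1) ≤ -(qr*σ*((σ-1-u)/4)) := by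
        nlinarith [mul_nonneg (mul_nonneg hq0.le hd0) (by linarith : (0:ℝ) ≤ u - σ/4)]
      linarith
    exact le_of_mul_le_mul_left h4 hqσ

lemma e2_bound {qr c σ τ u : ℝ} (hq : 3 ≤ qr) (hc1 : 1 ≤ c) (hc2 : c ≤ 2)
    (hτ : 1/2 ≤ τ) (hτ1 : τ < 1) (hσ : 2 ≤ σ) (hrel : c = qr * σ * (1 - τ))
    (hu : σ - 1 ≤ u) :
    qr*(σ-1)^2 - τ*(qr*u^2 + c*u) ≤ -(3*(u - σ + 1)) := by
  have hq0 : 0 < qr := by linarith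
  have hσ0 : 0 < σ := by linarith
  have hu1 : 1 ≤ u := by linarith
  have hFB : qr * σ * (qr*(σ-1)^2 - τ*(qr*(σ-1)^2 + c*(σ-1))) = c * (σ-1) * (c - qr) := by
    rw [hrel]; ring
  have hFBneg : qr*(σ-1)^2 - τ*(qr*(σ-1)^2 + c*(σ-1)) ≤ 0 := by
    have hprod : c * (σ-1) * (c - qr) ≤ 0 :=
      mul_nonpos_of_nonneg_of_nonpos (by nlinarith) (by linarith)
    have h4 : qr * σ * (qr*(σ-1)^2 - τ*(qr*(σ-1)^2 + c*(σ-1))) ≤ qr * σ * 0 := by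
      rw [mul_zero, hFB]; exact hprod
    exact le_of_mul_le_mul_left h4 (mul_pos hq0 hσ0)
  have hd : 0 ≤ u - (σ-1) := by linarith
  have hτq : 3/2 ≤ τ * qr := by nlinarith
  have e5 : 0 ≤ (τ*qr - 3/2) * ((u-(σ-1))*(u+(σ-1))) :=
    mul_nonneg (by linarith) (mul_nonneg hd (by linarith))
  have e6 : 0 ≤ (3/2) * ((u-(σ-1)) * (u+(σ-1) - 2)) :=
    mul_nonneg (by norm_num) (mul_nonneg hd (by linarith))
  have e7 : 0 ≤ τ*c*(u-(σ-1)) :=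
    mul_nonneg (mul_nonneg (by linarith) (by linarith)) hd
  have key2 : τ*(qr*u^2 + c*u) - τ*(qr*(σ-1)^2 + c*(σ-1))
      = (τ*qr - 3/2) * ((u-(σ-1))*(u+(σ-1))) + (3/2)*((u-(σ-1))*(u+(σ-1)-2))
        + 3*(u-(σ-1)) + τ*c*(u-(σ-1)) := by ring
  have hSB : τ*(qr*u^2 + c*u) - τ*(qr*(σ-1)^2 + c*(σ-1)) ≥ 3*(u - σ + 1) := by
    rw [key2]; linarith
  linarith

end Analytic

lemma shift_tsum (f : ℕ → ℝ≥0∞) (n : ℕ) (h0 : ∀ k, k < n → f k = 0) :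
    ∑' k, f k = ∑' m, f (n + m) := by
  refine (Function.Injective.tsum_eq (add_right_injective n) ?_).symm
  intro k hk
  rcases le_or_gt n k with h | h
  · refine ⟨k - n, ?_⟩
    show n + (k - n) = k
    omega
  · exact absurd (h0 k h) hk

section JL
variable {q Ξ : ℤ}

lemma Jlen_facts (hq : 3 ≤ q) (hqΞ : 1 ≤ q + Ξ)
    (hpow : (q : ℝ) + 1 + (Ξ : ℝ) ≤ (2 : ℝ) ^ ((q : ℝ) - 1))
    {σ : ℝ} (hσ : 2 ≤ σ) :
    2 ≤ Jlen q Ξ (σ-2) ∧ Jlen q Ξ (σ-2) ≤ (2:ℝ)^((q:ℝ)*(σ-1)^2) := by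
  have hq3 : (3:ℝ) ≤ (q:ℝ) := by exact_mod_cast hq
  have hqΞr : (1:ℝ) ≤ (q:ℝ) + (Ξ:ℝ) := by exact_mod_cast hqΞ
  have rpow_mono : ∀ {a b : ℝ}, a ≤ b → (2:ℝ)^a ≤ (2:ℝ)^b := fun hab =>
    (Real.rpow_le_rpow_left_iff (by norm_num)).mpr hab
  have one_le_rpow2 : ∀ a : ℝ, 0 ≤ a → (1:ℝ) ≤ (2:ℝ)^a := fun a ha => by
    calc (1:ℝ) = (2:ℝ)^(0:ℝ) := (Real.rpow_zero 2).symm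
      _ ≤ (2:ℝ)^a := rpow_mono ha
  set X : ℝ := (2:ℝ)^(Qf q (σ-2)) with hXdef
  set y : ℝ := (q:ℝ)*(2*(σ-2)+1) with hydef
  have hX1 : (1:ℝ) ≤ X := one_le_rpow2 _ (by rw [Qf]; positivity)
  have hyq : (q:ℝ) ≤ y := by rw [hydef]; nlinarith
  have hsplit : (2:ℝ)^(Qf q (σ-2+1)) = X * (2:ℝ)^y := by
    rw [hXdef, ← Real.rpow_add (by norm_num)]
    congr 1
    rw [Qf, Qf, hydef]; ring
  have hdiff : Qf q (σ-2+1) - Qf q (σ-2) = y := by rw [Qf, Qf, hydef]; ring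
  have h2q : 2*((q:ℝ)+1+(Ξ:ℝ)) ≤ (2:ℝ)^(q:ℝ) := by
    have he : (2:ℝ)^(q:ℝ) = 2 * (2:ℝ)^((q:ℝ)-1) := by
      have he2 := Real.rpow_add (by norm_num : (0:ℝ)<2) 1 ((q:ℝ)-1)
      rw [Real.rpow_one] at he2
      rw [show (1:ℝ) + ((q:ℝ)-1) = (q:ℝ) by ring] at he2
      exact he2
    rw [he]; linarith
  have hlog : Real.log 2 ≥ 1/2 := by have := Real.log_two_gt_d9; linarith
  have h2t : (1:ℝ) + (y - (q:ℝ))/2 ≤ (2:ℝ)^(y - (q:ℝ)) := by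
    rw [Real.rpow_def_of_pos (by norm_num)]
    have h2 := Real.add_one_le_exp (Real.log 2 * (y - (q:ℝ)))
    nlinarith [mul_nonneg (by linarith : (0:ℝ) ≤ Real.log 2 - 1/2) (by linarith : (0:ℝ) ≤ y - (q:ℝ))]
  have h2y : (2:ℝ)^(q:ℝ) + (y - (q:ℝ)) ≤ (2:ℝ)^y := by
    have he : (2:ℝ)^y = (2:ℝ)^(q:ℝ) * (2:ℝ)^(y - (q:ℝ)) := by
      rw [← Real.rpow_add (by norm_num)]; ring_nf
    have h2qpos : (2:ℝ) ≤ (2:ℝ)^(q:ℝ) := by nlinarith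
    rw [he]; nlinarith
  have hyXi : y + (Ξ:ℝ) + 3 ≤ (2:ℝ)^y := by nlinarith
  have hJval : Jlen q Ξ (σ-2) = X * (2:ℝ)^y - X - (y + (Ξ:ℝ)) := by
    rw [Jlen, hsplit, hdiff, hXdef]
  constructor
  · rw [hJval]
    have hy1 : (1:ℝ) ≤ (2:ℝ)^y := one_le_rpow2 _ (by nlinarith)
    nlinarith [mul_nonneg (by linarith : (0:ℝ) ≤ X - 1) (by linarith : (0:ℝ) ≤ (2:ℝ)^y - 1)]
  · have hPeq : (2:ℝ)^((q:ℝ)*(σ-1)^2) = X * (2:ℝ)^y := by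
      rw [← hsplit]; congr 1; rw [Qf]; ring_nf
    rw [hJval, hPeq]
    nlinarith
end JL

set_option maxHeartbeats 1000000 in
theorem stmt7 (Ξ q : ℤ) (hq : 3 ≤ q) (hqΞ : 1 ≤ q + Ξ)
    (hpow : (q : ℝ) + 1 + (Ξ : ℝ) ≤ (2 : ℝ) ^ ((q : ℝ) - 1))
    (ξ : ℝ) (hξ1 : 1 ≤ (Ξ : ℝ) - 2 * ξ) (hξ2 : (Ξ : ℝ) - 2 * ξ ≤ 2) :
    ∀ τ : ℝ, ((q : ℝ) - 2) / ((q : ℝ) - 1) < τ → τ < 1 →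
      2 ≤ ((Ξ : ℝ) - 2 * ξ) / ((q : ℝ) * (1 - τ)) →
      Pi2 q Ξ ξ τ (lamf q Ξ (((Ξ : ℝ) - 2 * ξ) / ((q : ℝ) * (1 - τ)) - 2)) ≤
        ENNReal.ofReal (10 * (2 : ℝ) ^ (τ * ξ) + 101) := by
  intro τ hτa hτb hσ2
  have h : Hyp q Ξ := ⟨hq, hqΞ, hpow_int hq hpow⟩
  have hq3 : (3:ℝ) ≤ (q:ℝ) := by exact_mod_cast hq
  have hτhalf : (1:ℝ)/2 ≤ τ := by
    have h1 : (1:ℝ)/2 ≤ ((q:ℝ)-2)/((q:ℝ)-1) := by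
      rw [div_le_div_iff₀ (by norm_num) (by linarith)]; linarith
    linarith
  have hτpos : (0:ℝ) < τ := by linarith
  set c : ℝ := (Ξ:ℝ) - 2*ξ with hcdef
  set σ : ℝ := c / ((q:ℝ)*(1-τ)) with hσdef
  have hqτ : (0:ℝ) < (q:ℝ)*(1-τ) := mul_pos (by linarith) (by linarith)
  have hrel : c = (q:ℝ) * σ * (1 - τ) := by
    rw [hσdef]; field_simp; rw [div_self (sub_pos.mpr hτb).ne']
  -- rpow helpers
  have rpow_mono : ∀ {a b : ℝ}, a ≤ b → (2:ℝ)^a ≤ (2:ℝ)^b := fun hab =>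
    (Real.rpow_le_rpow_left_iff (by norm_num)).mpr hab
  have rpow_split : ∀ a b : ℝ, (2:ℝ)^(a+b) = (2:ℝ)^a * (2:ℝ)^b := fun a b =>
    Real.rpow_add (by norm_num) a b
  have rpow_pow : ∀ (t:ℝ) (m:ℕ), (2:ℝ)^(t*(m:ℝ)) = ((2:ℝ)^t)^m := fun t m => by
    rw [Real.rpow_mul (by norm_num), Real.rpow_natCast]
  have rpow_nonneg : ∀ t:ℝ, (0:ℝ) ≤ (2:ℝ)^t := fun t =>
    (Real.rpow_pos_of_pos (by norm_num) t).le
  -- λ facts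
  obtain ⟨hJ2, hJP⟩ := Jlen_facts hq hqΞ hpow hσ2
  have hJpos : (0:ℝ) < Jlen q Ξ (σ-2) := by linarith
  set lam : ℝ := lamf q Ξ (σ - 2) with hlamdef
  have hlam : lam = 1 / Jlen q Ξ (σ-2) := rfl
  have hlampos : (0:ℝ) < lam := by rw [hlam]; positivity
  set P : ℝ := (2:ℝ)^((q:ℝ)*(σ-1)^2) with hPdef
  have h1P : (1:ℝ) ≤ P := by
    rw [hPdef]
    calc (1:ℝ) = (2:ℝ)^(0:ℝ) := (Real.rpow_zero 2).symm
      _ ≤ _ := rpow_mono (by positivity)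
  have h3P : 1 + 2/lam ≤ 3*P := by
    have h2l : 2/lam = 2 * Jlen q Ξ (σ-2) := by rw [hlam]; field_simp
    rw [h2l]; linarith
  -- the two comparison families
  obtain ⟨GZ, hGZ⟩ : ∃ GZ : ℕ → ℕ → ℝ≥0∞, GZ = fun (s : ℕ) (k : ℕ) =>
      if Af q s ≤ k ∧ (k:ℤ) < (Af q s : ℤ) + Lz q Ξ s then
        ENNReal.ofReal ((2:ℝ)^(τ*ξ - τ*((q:ℝ)*(s:ℝ)^2 + c*(s:ℝ) ) - τ*((k:ℝ) - (Af q s : ℝ) + 1)))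
      else 0 := ⟨_, rfl⟩
  obtain ⟨GO, hGO⟩ : ∃ GO : ℕ → ℕ → ℝ≥0∞, GO = fun (s : ℕ) (k : ℕ) =>
      if (Af q s : ℤ) + Lz q Ξ s ≤ (k:ℤ) ∧ k < Af q (s+1) then
        ENNReal.ofReal ((2:ℝ)^(-lam*(k:ℝ) - τ*((q:ℝ)*((s:ℝ)+1)^2 + c*((s:ℝ)+1))))
      else 0 := ⟨_, rfl⟩
  -- pointwise domination
  have hpoint : ∀ k : ℕ,
      ENNReal.ofReal ((2:ℝ)^(-lam*(k:ℝ) - τ*(Nf q Ξ k : ℝ) + τ*ξ*(Bf q Ξ k : ℝ)))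
      ≤ (if k = 0 then 1 else 0) + ((∑' s, GZ s k) + (∑' s, GO s k)) := by
    intro k
    rcases Nat.eq_zero_or_pos k with hk0 | hk1
    · subst hk0
      have he : -lam*((0:ℕ):ℝ) - τ*((Nf q Ξ 0 : ℕ):ℝ) + τ*ξ*((Bf q Ξ 0 : ℕ):ℝ) = 0 := by
        rw [Nf_zero, Bf_zero]; norm_num
      rw [he, Real.rpow_zero, ENNReal.ofReal_one, if_pos rfl]
      exact le_self_add
    · obtain ⟨s, hcase⟩ := VAL h hk1
      rcases hcase with ⟨hA, hL, hN, hB⟩ | ⟨hge, hlt, hN, hB⟩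
      · have hNr : (Nf q Ξ k : ℝ) = (q:ℝ)*(s:ℝ)^2 + (Ξ:ℝ)*(s:ℝ) + ((k:ℝ) - (Af q s:ℝ) + 1) := by
          have h2 := congrArg (fun z : ℤ => (z:ℝ)) hN
          simp only [Cz] at h2
          push_cast at h2
          linarith [h2]
        have hBr : (Bf q Ξ k : ℝ) = 2*(s:ℝ) + 1 := by exact_mod_cast hB
        calc ENNReal.ofReal ((2:ℝ)^(-lam*(k:ℝ) - τ*(Nf q Ξ k : ℝ) + τ*ξ*(Bf q Ξ k : ℝ)))
            ≤ GZ s k := by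
              simp only [hGZ]
              rw [if_pos ⟨hA, hL⟩]
              apply ENNReal.ofReal_le_ofReal
              apply rpow_mono
              rw [hNr, hBr, hcdef]
              have hlk : (0:ℝ) ≤ lam * (k:ℝ) := mul_nonneg hlampos.le (Nat.cast_nonneg k)
              nlinarith [hlk]
          _ ≤ ∑' t, GZ t k := ENNReal.le_tsum s
          _ ≤ (∑' t, GZ t k) + (∑' t, GO t k) := le_self_add
          _ ≤ _ := le_add_self
      · have hNr : (Nf q Ξ k : ℝ) = (q:ℝ)*((s:ℝ)+1)^2 + (Ξ:ℝ)*((s:ℝ)+1) := by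
          have h2 := congrArg (fun z : ℤ => (z:ℝ)) hN
          simp only [Cz] at h2
          push_cast at h2
          linarith [h2]
        have hBr : (Bf q Ξ k : ℝ) = 2*(s:ℝ) + 2 := by exact_mod_cast hB
        calc ENNReal.ofReal ((2:ℝ)^(-lam*(k:ℝ) - τ*(Nf q Ξ k : ℝ) + τ*ξ*(Bf q Ξ k : ℝ)))
            ≤ GO s k := by
              simp only [hGO]
              rw [if_pos ⟨hge, hlt⟩]
              apply ENNReal.ofReal_le_ofReal
              apply rpow_mono
              rw [hNr, hBr, hcdef]
              nlinarith []
          _ ≤ ∑' t, GO t k := ENNReal.le_tsum s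
          _ ≤ (∑' t, GZ t k) + (∑' t, GO t k) := le_add_self
          _ ≤ _ := le_add_self
  -- global decomposition
  have hdecomp : Pi2 q Ξ ξ τ lam ≤ 1 + ((∑' s, ∑' k, GZ s k) + (∑' s, ∑' k, GO s k)) := by
    rw [Pi2]
    calc (∑' k : ℕ, ENNReal.ofReal ((2:ℝ)^(-lam*(k:ℝ) - τ*(Nf q Ξ k : ℝ) + τ*ξ*(Bf q Ξ k : ℝ))))
        ≤ ∑' k : ℕ, ((if k = 0 then 1 else 0) + ((∑' s, GZ s k) + (∑' s, GO s k))) :=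
          ENNReal.tsum_le_tsum hpoint
      _ = (∑' k : ℕ, (if k = 0 then (1:ℝ≥0∞) else 0)) +
            ∑' k : ℕ, ((∑' s, GZ s k) + (∑' s, GO s k)) := ENNReal.tsum_add
      _ = 1 + ((∑' k : ℕ, ∑' s, GZ s k) + (∑' k : ℕ, ∑' s, GO s k)) := by
          rw [tsum_ite_eq (0:ℕ) (fun _ => (1:ℝ≥0∞)), ENNReal.tsum_add]
      _ = 1 + ((∑' s, ∑' k, GZ s k) + (∑' s, ∑' k, GO s k)) := by
          rw [ENNReal.tsum_comm (f := fun k s => GZ s k),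
              ENNReal.tsum_comm (f := fun k s => GO s k)]
  -- zero-block sums
  have hZs : ∀ s:ℕ, (∑' k, GZ s k) ≤
      (ENNReal.ofReal ((2:ℝ)^(τ*ξ)) * 4) * (ENNReal.ofReal ((2:ℝ)^(-(3/2):ℝ)))^s := by
    intro s
    have hshift : (∑' k, GZ s k) = ∑' m, GZ s (Af q s + m) := by
      apply shift_tsum
      intro k hk
      simp only [hGZ]
      rw [if_neg]
      rintro ⟨h1, _⟩
      omega
    rw [hshift]
    have hterm : ∀ m:ℕ, GZ s (Af q s + m) ≤
        (ENNReal.ofReal ((2:ℝ)^(τ*ξ)) * (ENNReal.ofReal ((2:ℝ)^(-(3/2):ℝ)))^s) *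
          (ENNReal.ofReal ((2:ℝ)^(-(1/2):ℝ)))^m := by
      intro m
      simp only [hGZ]
      split_ifs with hcond
      · have hE : τ*ξ - τ*((q:ℝ)*(s:ℝ)^2 + c*(s:ℝ)) - τ*(((Af q s + m : ℕ):ℝ) - (Af q s:ℝ) + 1)
            ≤ τ*ξ + (-(3/2))*(s:ℝ) + (-(1/2))*(m:ℝ) := by
          have hcast : ((Af q s + m : ℕ):ℝ) = (Af q s : ℝ) + (m:ℝ) := by push_cast; ring
          rw [hcast]
          have hsnn : (0:ℝ) ≤ (s:ℝ) := Nat.cast_nonneg s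
          have hmnn : (0:ℝ) ≤ (m:ℝ) := Nat.cast_nonneg m
          have hs01 : (0:ℝ) ≤ (s:ℝ)*(3*(s:ℝ)-2) := by
            rcases Nat.eq_zero_or_pos s with h0 | h1
            · simp [h0]
            · have : (1:ℝ) ≤ (s:ℝ) := by exact_mod_cast h1
              nlinarith
          have hXnn : (0:ℝ) ≤ (q:ℝ)*(s:ℝ)^2 + c*(s:ℝ) := by positivity
          have h1 : (3/2)*(s:ℝ) ≤ τ*((q:ℝ)*(s:ℝ)^2 + c*(s:ℝ)) := by
            nlinarith [mul_nonneg (by linarith : (0:ℝ) ≤ τ - 1/2) hXnn,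
              mul_nonneg (by linarith : (0:ℝ) ≤ c - 1) hsnn,
              mul_nonneg (by linarith : (0:ℝ) ≤ (q:ℝ) - 3) (sq_nonneg (s:ℝ))]
          have h2 : (1/2)*(m:ℝ) ≤ τ*((m:ℝ)+1) := by nlinarith
          linarith
        have hprod : (2:ℝ)^(τ*ξ) * ((2:ℝ)^(-(3/2):ℝ))^s * ((2:ℝ)^(-(1/2):ℝ))^m
            = (2:ℝ)^(τ*ξ + (-(3/2))*(s:ℝ) + (-(1/2))*(m:ℝ)) := by
          rw [rpow_split, rpow_split, rpow_pow, rpow_pow]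
        calc ENNReal.ofReal ((2:ℝ)^(τ*ξ - τ*((q:ℝ)*(s:ℝ)^2 + c*(s:ℝ)) -
              τ*(((Af q s + m : ℕ):ℝ) - (Af q s:ℝ) + 1)))
            ≤ ENNReal.ofReal ((2:ℝ)^(τ*ξ) * ((2:ℝ)^(-(3/2):ℝ))^s * ((2:ℝ)^(-(1/2):ℝ))^m) := by
              apply ENNReal.ofReal_le_ofReal
              rw [hprod]
              exact rpow_mono hE
          _ = _ := by
              rw [ENNReal.ofReal_mul (by positivity), ENNReal.ofReal_mul (rpow_nonneg _),
                ENNReal.ofReal_pow (rpow_nonneg _), ENNReal.ofReal_pow (rpow_nonneg _)]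
      · exact zero_le
    calc (∑' m, GZ s (Af q s + m))
        ≤ ∑' m, (ENNReal.ofReal ((2:ℝ)^(τ*ξ)) * (ENNReal.ofReal ((2:ℝ)^(-(3/2):ℝ)))^s) *
            (ENNReal.ofReal ((2:ℝ)^(-(1/2):ℝ)))^m := ENNReal.tsum_le_tsum hterm
      _ = (ENNReal.ofReal ((2:ℝ)^(τ*ξ)) * (ENNReal.ofReal ((2:ℝ)^(-(3/2):ℝ)))^s) *
            ∑' m, (ENNReal.ofReal ((2:ℝ)^(-(1/2):ℝ)))^m := ENNReal.tsum_mul_left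
      _ ≤ (ENNReal.ofReal ((2:ℝ)^(τ*ξ)) * (ENNReal.ofReal ((2:ℝ)^(-(3/2):ℝ)))^s) *
            ENNReal.ofReal ((1 - (3:ℝ)/4)⁻¹) :=
          mul_le_mul_right (geom_sum_le (rpow_nonneg _) rpow_half (by norm_num)) _
      _ = (ENNReal.ofReal ((2:ℝ)^(τ*ξ)) * 4) * (ENNReal.ofReal ((2:ℝ)^(-(3/2):ℝ)))^s := by
          rw [show ((1 - (3:ℝ)/4)⁻¹ : ℝ) = 4 by norm_num]
          rw [show ENNReal.ofReal (4:ℝ) = 4 by norm_num [ENNReal.ofReal_ofNat]]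
          ring
  -- one-block sums: counting bound
  have hOcnt : ∀ s:ℕ, (∑' k, GO s k) ≤
      ENNReal.ofReal ((2:ℝ)^((q:ℝ)*((s:ℝ)+1)^2 - τ*((q:ℝ)*((s:ℝ)+1)^2 + c*((s:ℝ)+1)))) := by
    intro s
    have hsupp : ∀ k ∉ Finset.range (Af q (s+1)), GO s k = 0 := by
      intro k hk
      simp only [hGO]
      rw [if_neg]
      rintro ⟨_, h2⟩
      simp only [Finset.mem_range, not_lt] at hk
      omega
    rw [tsum_eq_sum hsupp]
    have hone : ∀ k ∈ Finset.range (Af q (s+1)), GO s k ≤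
        ENNReal.ofReal ((2:ℝ)^(-(τ*((q:ℝ)*((s:ℝ)+1)^2 + c*((s:ℝ)+1))))) := by
      intro k _
      simp only [hGO]
      split_ifs with hcond
      · apply ENNReal.ofReal_le_ofReal
        apply rpow_mono
        nlinarith [mul_nonneg hlampos.le (Nat.cast_nonneg k)]
      · exact zero_le
    have hA1eq : ((Af q (s+1) : ℕ):ℝ) = (2:ℝ)^((q:ℝ)*((s:ℝ)+1)^2) := by
      rw [Af_cast hq]
      congr 1
      rw [Qf]; push_cast; ring
    calc (∑ k ∈ Finset.range (Af q (s+1)), GO s k)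
        ≤ ∑ k ∈ Finset.range (Af q (s+1)),
            ENNReal.ofReal ((2:ℝ)^(-(τ*((q:ℝ)*((s:ℝ)+1)^2 + c*((s:ℝ)+1))))) :=
          Finset.sum_le_sum hone
      _ = (Af q (s+1) : ℝ≥0∞) *
            ENNReal.ofReal ((2:ℝ)^(-(τ*((q:ℝ)*((s:ℝ)+1)^2 + c*((s:ℝ)+1))))) := by
          rw [Finset.sum_const, Finset.card_range, nsmul_eq_mul]
      _ = ENNReal.ofReal (((Af q (s+1) : ℕ):ℝ) *
            (2:ℝ)^(-(τ*((q:ℝ)*((s:ℝ)+1)^2 + c*((s:ℝ)+1))))) := by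
          rw [ENNReal.ofReal_mul (Nat.cast_nonneg _), ENNReal.ofReal_natCast]
      _ = _ := by
          congr 1
          rw [hA1eq, ← rpow_split]
          try congr 1
          try ring
  -- one-block sums: geometric bound
  have hOgeo : ∀ s:ℕ, (∑' k, GO s k) ≤
      3 * ENNReal.ofReal ((2:ℝ)^((q:ℝ)*(σ-1)^2 - τ*((q:ℝ)*((s:ℝ)+1)^2 + c*((s:ℝ)+1)))) := by
    intro s
    have hterm : ∀ k:ℕ, GO s k ≤
        ENNReal.ofReal ((2:ℝ)^(-(τ*((q:ℝ)*((s:ℝ)+1)^2 + c*((s:ℝ)+1))))) *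
          (ENNReal.ofReal ((2:ℝ)^(-lam)))^k := by
      intro k
      simp only [hGO]
      split_ifs with hcond
      · rw [← ENNReal.ofReal_pow (rpow_nonneg _), ← ENNReal.ofReal_mul (rpow_nonneg _)]
        apply ENNReal.ofReal_le_ofReal
        rw [← rpow_pow, ← rpow_split]
        apply rpow_mono
        apply le_of_eq
        ring
      · exact zero_le
    calc (∑' k, GO s k)
        ≤ ∑' k, ENNReal.ofReal ((2:ℝ)^(-(τ*((q:ℝ)*((s:ℝ)+1)^2 + c*((s:ℝ)+1))))) *
            (ENNReal.ofReal ((2:ℝ)^(-lam)))^k := ENNReal.tsum_le_tsum hterm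
      _ = ENNReal.ofReal ((2:ℝ)^(-(τ*((q:ℝ)*((s:ℝ)+1)^2 + c*((s:ℝ)+1))))) *
            ∑' k, (ENNReal.ofReal ((2:ℝ)^(-lam)))^k := ENNReal.tsum_mul_left
      _ ≤ ENNReal.ofReal ((2:ℝ)^(-(τ*((q:ℝ)*((s:ℝ)+1)^2 + c*((s:ℝ)+1))))) *
            ENNReal.ofReal (3*P) := by
          apply mul_le_mul_right
          rw [ENNReal.tsum_geometric]
          have h2l1 : (2:ℝ)^(-lam) < 1 :=
            Real.rpow_lt_one_of_one_lt_of_neg (by norm_num) (by linarith)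
          have h1s : (1:ℝ≥0∞) - ENNReal.ofReal ((2:ℝ)^(-lam))
              = ENNReal.ofReal (1 - (2:ℝ)^(-lam)) := by
            rw [ENNReal.ofReal_sub _ (rpow_nonneg _), ENNReal.ofReal_one]
          rw [h1s, ← ENNReal.ofReal_inv_of_pos (by linarith)]
          apply ENNReal.ofReal_le_ofReal
          calc (1 - (2:ℝ)^(-lam))⁻¹ ≤ 1 + 2/lam := one_sub_rpow_inv hlampos
            _ ≤ 3*P := h3P
      _ = _ := by
          rw [← ENNReal.ofReal_mul (rpow_nonneg _)]
          rw [show (2:ℝ)^(-(τ*((q:ℝ)*((s:ℝ)+1)^2 + c*((s:ℝ)+1)))) * (3*P)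
              = 3 * (P * (2:ℝ)^(-(τ*((q:ℝ)*((s:ℝ)+1)^2 + c*((s:ℝ)+1))))) by ring]
          rw [ENNReal.ofReal_mul (by norm_num : (0:ℝ) ≤ 3)]
          rw [show ENNReal.ofReal (3:ℝ) = 3 by norm_num]
          congr 1
          rw [hPdef, ← rpow_split]
          try congr 1
          try ring
  -- trichotomy bounds
  obtain ⟨D1, hD1⟩ : ∃ D : ℕ → ℝ≥0∞, D = fun s : ℕ =>
      ENNReal.ofReal ((2:ℝ)^(-(((s:ℝ)+1)/4))) := ⟨_, rfl⟩
  obtain ⟨D2, hD2⟩ : ∃ D : ℕ → ℝ≥0∞, D = fun s : ℕ =>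
      if ((s:ℝ)+1) ≤ σ - 1 then ENNReal.ofReal ((2:ℝ)^((((s:ℝ)+1)-(σ-1))/4)) else 0 := ⟨_, rfl⟩
  obtain ⟨D3, hD3⟩ : ∃ D : ℕ → ℝ≥0∞, D = fun s : ℕ =>
      if σ - 1 ≤ ((s:ℝ)+1) then 3 * ENNReal.ofReal ((2:ℝ)^(-(3*(((s:ℝ)+1)-(σ-1))))) else 0 := ⟨_, rfl⟩
  have hOS : ∀ s:ℕ, (∑' k, GO s k) ≤ D1 s + (D2 s + D3 s) := by
    intro s
    have hsnn : (0:ℝ) ≤ (s:ℝ) := Nat.cast_nonneg s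
    have hu1 : (1:ℝ) ≤ (s:ℝ)+1 := by linarith
    rcases le_total ((s:ℝ)+1) (σ-1) with hcs | hcs
    · rcases e1_bound hq3 hξ1 hξ2 hτhalf hτb hσ2 hrel hu1 hcs with he | he
      · calc (∑' k, GO s k) ≤ _ := hOcnt s
          _ ≤ D1 s := by
              simp only [hD1]
              apply ENNReal.ofReal_le_ofReal
              apply rpow_mono
              linarith [he]
          _ ≤ D1 s + (D2 s + D3 s) := le_self_add
      · calc (∑' k, GO s k) ≤ _ := hOcnt s
          _ ≤ D2 s := by
              simp only [hD2]
              rw [if_pos hcs]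
              apply ENNReal.ofReal_le_ofReal
              apply rpow_mono
              linarith [he]
          _ ≤ D2 s + D3 s := le_self_add
          _ ≤ D1 s + (D2 s + D3 s) := le_add_self
    · have he := e2_bound hq3 hξ1 hξ2 hτhalf hτb hσ2 hrel hcs
      calc (∑' k, GO s k) ≤ _ := hOgeo s
        _ ≤ D3 s := by
            simp only [hD3]
            rw [if_pos hcs]
            apply mul_le_mul_right
            apply ENNReal.ofReal_le_ofReal
            apply rpow_mono
            linarith [he]
        _ ≤ D2 s + D3 s := le_add_self
        _ ≤ D1 s + (D2 s + D3 s) := le_add_self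
  -- summing the three families
  have hS1 : (∑' s, D1 s) ≤ 7 := by
    have hterm : ∀ s:ℕ, D1 s ≤ (ENNReal.ofReal ((2:ℝ)^(-(1/4):ℝ)))^s := by
      intro s
      simp only [hD1]
      rw [← ENNReal.ofReal_pow (rpow_nonneg _), ← rpow_pow]
      apply ENNReal.ofReal_le_ofReal
      apply rpow_mono
      have : (0:ℝ) ≤ (s:ℝ) := Nat.cast_nonneg s
      linarith
    calc (∑' s, D1 s) ≤ ∑' s, (ENNReal.ofReal ((2:ℝ)^(-(1/4):ℝ)))^s :=
          ENNReal.tsum_le_tsum hterm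
      _ ≤ ENNReal.ofReal ((1 - (6:ℝ)/7)⁻¹) :=
          geom_sum_le (rpow_nonneg _) rpow_quarter (by norm_num)
      _ ≤ 7 := by
          rw [show ((1-(6:ℝ)/7)⁻¹ : ℝ) = 7 by norm_num]
          norm_num
  have hS2 : (∑' s, D2 s) ≤ 7 := by
    have hσ1nn : (0:ℝ) ≤ σ - 1 := by linarith
    have hsupp : ∀ s ∉ Finset.range (⌊σ - 1⌋₊), D2 s = 0 := by
      intro s hs
      simp only [Finset.mem_range, not_lt] at hs
      simp only [hD2]
      rw [if_neg]
      intro hcs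
      have h1 : s + 1 ≤ ⌊σ - 1⌋₊ := Nat.le_floor (by push_cast; linarith)
      omega
    rw [tsum_eq_sum hsupp, ← Finset.sum_range_reflect]
    have hMle : ((⌊σ - 1⌋₊ : ℕ):ℝ) ≤ σ - 1 := Nat.floor_le hσ1nn
    have hterm : ∀ v ∈ Finset.range (⌊σ - 1⌋₊),
        D2 (⌊σ - 1⌋₊ - 1 - v) ≤ (ENNReal.ofReal ((2:ℝ)^(-(1/4):ℝ)))^v := by
      intro v hv
      simp only [Finset.mem_range] at hv
      simp only [hD2]
      split_ifs with hcs
      · rw [← ENNReal.ofReal_pow (rpow_nonneg _), ← rpow_pow]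
        apply ENNReal.ofReal_le_ofReal
        apply rpow_mono
        have hnat : (⌊σ - 1⌋₊ - 1 - v) + v + 1 = ⌊σ - 1⌋₊ := by omega
        have hcast : ((⌊σ - 1⌋₊ - 1 - v : ℕ):ℝ) + (v:ℝ) + 1 = ((⌊σ - 1⌋₊ : ℕ):ℝ) := by
          exact_mod_cast congrArg (fun n : ℕ => (n:ℝ)) hnat
        linarith
      · exact zero_le
    calc (∑ v ∈ Finset.range (⌊σ - 1⌋₊), D2 (⌊σ - 1⌋₊ - 1 - v))
        ≤ ∑ v ∈ Finset.range (⌊σ - 1⌋₊), (ENNReal.ofReal ((2:ℝ)^(-(1/4):ℝ)))^v :=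
          Finset.sum_le_sum hterm
      _ ≤ ∑' v, (ENNReal.ofReal ((2:ℝ)^(-(1/4):ℝ)))^v := ENNReal.sum_le_tsum _
      _ ≤ ENNReal.ofReal ((1 - (6:ℝ)/7)⁻¹) :=
          geom_sum_le (rpow_nonneg _) rpow_quarter (by norm_num)
      _ ≤ 7 := by
          rw [show ((1-(6:ℝ)/7)⁻¹ : ℝ) = 7 by norm_num]
          norm_num
  have hS3 : (∑' s, D3 s) ≤ 6 := by
    have hshift : (∑' s, D3 s) = ∑' v, D3 (⌈σ - 2⌉₊ + v) := by
      apply shift_tsum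
      intro s hs
      simp only [hD3]
      rw [if_neg]
      intro hcs
      have h1 : ⌈σ - 2⌉₊ ≤ s := Nat.ceil_le.mpr (by push_cast; linarith)
      omega
    rw [hshift]
    have hs0ge : σ - 2 ≤ ((⌈σ - 2⌉₊ : ℕ):ℝ) := Nat.le_ceil _
    have hterm : ∀ v:ℕ, D3 (⌈σ - 2⌉₊ + v) ≤ 3 * (ENNReal.ofReal ((2:ℝ)^(-(3:ℝ))))^v := by
      intro v
      simp only [hD3]
      split_ifs with hcs
      · apply mul_le_mul_right
        rw [← ENNReal.ofReal_pow (rpow_nonneg _), ← rpow_pow]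
        apply ENNReal.ofReal_le_ofReal
        apply rpow_mono
        have hcast : (((⌈σ - 2⌉₊ + v : ℕ)):ℝ) = ((⌈σ - 2⌉₊ : ℕ):ℝ) + (v:ℝ) := by push_cast; ring
        rw [hcast]
        linarith
      · exact zero_le
    calc (∑' v, D3 (⌈σ - 2⌉₊ + v))
        ≤ ∑' v, 3 * (ENNReal.ofReal ((2:ℝ)^(-(3:ℝ))))^v := ENNReal.tsum_le_tsum hterm
      _ = 3 * ∑' v, (ENNReal.ofReal ((2:ℝ)^(-(3:ℝ))))^v := ENNReal.tsum_mul_left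
      _ ≤ 3 * ENNReal.ofReal ((1 - (1:ℝ)/2)⁻¹) :=
          mul_le_mul_right (geom_sum_le (rpow_nonneg _) rpow_three (by norm_num)) _
      _ ≤ 6 := by
          rw [show ((1-(1:ℝ)/2)⁻¹:ℝ) = 2 by norm_num]
          rw [show ENNReal.ofReal (2:ℝ) = 2 by norm_num]
          norm_num
  -- totals
  have hZT : (∑' s, ∑' k, GZ s k) ≤ ENNReal.ofReal ((2:ℝ)^(τ*ξ)) * 8 := by
    calc (∑' s, ∑' k, GZ s k)
        ≤ ∑' s, (ENNReal.ofReal ((2:ℝ)^(τ*ξ)) * 4) * (ENNReal.ofReal ((2:ℝ)^(-(3/2):ℝ)))^s :=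
          ENNReal.tsum_le_tsum hZs
      _ = (ENNReal.ofReal ((2:ℝ)^(τ*ξ)) * 4) * ∑' s, (ENNReal.ofReal ((2:ℝ)^(-(3/2):ℝ)))^s :=
          ENNReal.tsum_mul_left
      _ ≤ (ENNReal.ofReal ((2:ℝ)^(τ*ξ)) * 4) * ENNReal.ofReal ((1 - (1:ℝ)/2)⁻¹) :=
          mul_le_mul_right (geom_sum_le (rpow_nonneg _) rpow_threehalf (by norm_num)) _
      _ = ENNReal.ofReal ((2:ℝ)^(τ*ξ)) * 8 := by
          rw [show ((1-(1:ℝ)/2)⁻¹:ℝ) = 2 by norm_num]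
          rw [show ENNReal.ofReal (2:ℝ) = 2 by norm_num]
          ring
  have hOT : (∑' s, ∑' k, GO s k) ≤ 20 := by
    calc (∑' s, ∑' k, GO s k) ≤ ∑' s, (D1 s + (D2 s + D3 s)) := ENNReal.tsum_le_tsum hOS
      _ = (∑' s, D1 s) + ((∑' s, D2 s) + (∑' s, D3 s)) := by
          rw [ENNReal.tsum_add, ENNReal.tsum_add]
      _ ≤ 7 + (7 + 6) := add_le_add hS1 (add_le_add hS2 hS3)
      _ = 20 := by norm_num
  calc Pi2 q Ξ ξ τ lam ≤ 1 + ((∑' s, ∑' k, GZ s k) + (∑' s, ∑' k, GO s k)) := hdecomp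
    _ ≤ 1 + (ENNReal.ofReal ((2:ℝ)^(τ*ξ)) * 8 + 20) := add_le_add le_rfl (add_le_add hZT hOT)
    _ ≤ ENNReal.ofReal (10 * (2:ℝ)^(τ*ξ) + 101) := by
        rw [ENNReal.ofReal_add (by positivity) (by norm_num),
          ENNReal.ofReal_mul (by norm_num : (0:ℝ) ≤ 10)]
        rw [show ENNReal.ofReal (10:ℝ) = 10 by norm_num,
          show ENNReal.ofReal (101:ℝ) = 101 by norm_num]
        have h8 : ENNReal.ofReal ((2:ℝ)^(τ*ξ)) * 8 ≤ 10 * ENNReal.ofReal ((2:ℝ)^(τ*ξ)) := by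
          rw [mul_comm]
          exact mul_le_mul_left (by norm_num) _
        have heq : (1:ℝ≥0∞) + (ENNReal.ofReal ((2:ℝ)^(τ*ξ)) * 8 + 20)
            = ENNReal.ofReal ((2:ℝ)^(τ*ξ)) * 8 + 21 := by ring
        rw [heq]
        exact add_le_add h8 (by norm_num)
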